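/- If A is a subset of an Abelian complete metric group X such that for every compact set K ⊆ X there exists x ∈ X with K ∩ (A+x) having non-empty interior in K, then A is Haar-open; i.e., for every non-empty compact K ⊆ X and every point p ∈ K there exists y ∈ X such that K ∩ (A+y) is a neighborhood of p in K. -/

import Mathlib

open Topology Metric Filter Set

namespace HaarProof

attribute [local instance] Classical.propDecidable
set_option linter.unusedSectionVars false

variable {X : Type*} [MetricSpace X] [AddCommGroup X] [IsTopologicalAddGroup X]

section basic

lemma hdist_self_add (hinv : ∀ x y z : X, dist (x + z) (y + z) = dist x y)
    (a b : X) : dist a (a + b) = dist 0 b := by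
  have := hinv 0 b a
  rw [zero_add, add_comm b a] at this
  exact this

lemma hdist_sub_zero (hinv : ∀ x y z : X, dist (x + z) (y + z) = dist x y)
    (a b : X) : dist (a - b) 0 = dist a b := by
  have := hinv (a - b) 0 b
  simpa using this.symm

lemma hdist_zero_sum (hinv : ∀ x y z : X, dist (x + z) (y + z) = dist x y)
    (s : Finset ℕ) (f : ℕ → X) :
    dist 0 (∑ n ∈ s, f n) ≤ ∑ n ∈ s, dist 0 (f n) := by
  induction s using Finset.cons_induction with
  | empty => simp
  | cons a s ha ih =>
    rw [Finset.sum_cons, Finset.sum_cons]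
    calc dist 0 (f a + ∑ n ∈ s, f n)
        ≤ dist 0 (f a) + dist (f a) (f a + ∑ n ∈ s, f n) := dist_triangle _ _ _
      _ = dist 0 (f a) + dist 0 (∑ n ∈ s, f n) := by rw [hdist_self_add hinv]
      _ ≤ _ := by gcongr

lemma sum_pow_Ico_le (M M' : ℕ) :
    ∑ n ∈ Finset.Ico M M', ((1:ℝ)/2)^n ≤ 2 * (1/2)^M := by
  rw [Finset.sum_Ico_eq_sum_range]
  have : ∀ k ∈ Finset.range (M' - M), ((1:ℝ)/2)^(M + k) = (1/2)^M * (1/2)^k := by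
    intro k _; rw [pow_add]
  rw [Finset.sum_congr rfl this, ← Finset.mul_sum, mul_comm]
  exact mul_le_mul_of_nonneg_right (sum_geometric_two_le _) (by positivity)

end basic

section net

/-- A finite `ε`-net of `S` (with `0` added). -/
noncomputable def netOf (S : Set X) (ε : ℝ) : Set X :=
  (if h : ∃ t ⊆ S, t.Finite ∧ S ⊆ ⋃ y ∈ t, ball y ε then h.choose else ∅) ∪ {0}

lemma netOf_exists {S : Set X} (hS : IsCompact S) {ε : ℝ} (hε : 0 < ε) :
    ∃ t ⊆ S, t.Finite ∧ S ⊆ ⋃ y ∈ t, ball y ε := by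
  have := (totallyBounded_iff_subset.1 hS.totallyBounded)
    {p : X × X | dist p.1 p.2 < ε} (dist_mem_uniformity hε)
  obtain ⟨t, hts, htf, hcov⟩ := this
  exact ⟨t, hts, htf, hcov⟩

lemma netOf_finite (S : Set X) (ε : ℝ) : (netOf S ε).Finite := by
  unfold netOf
  split
  · next h => exact h.choose_spec.2.1.union (finite_singleton 0)
  · simp

lemma zero_mem_netOf (S : Set X) (ε : ℝ) : (0:X) ∈ netOf S ε := by
  unfold netOf; right; rfl

lemma netOf_subset (S : Set X) (ε : ℝ) : netOf S ε ⊆ S ∪ {0} := by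
  unfold netOf
  split
  · next h => exact union_subset_union_left _ h.choose_spec.1
  · simp

lemma netOf_cover {S : Set X} (hS : IsCompact S) {ε : ℝ} (hε : 0 < ε) :
    ∀ s ∈ S, ∃ y ∈ netOf S ε, dist s y < ε := by
  intro s hs
  unfold netOf
  split
  · next h =>
    have := h.choose_spec.2.2 hs
    simp only [mem_iUnion, mem_ball] at this
    obtain ⟨y, hy, hd⟩ := this
    exact ⟨y, Or.inl hy, hd⟩
  · next h => exact absurd (netOf_exists hS hε) h

end net

section construction

variable (K : Set X)

/-- The recursive sequence of compact "remainder" sets. -/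
noncomputable def Sq : ℕ → Set X
  | 0 => K ∩ closedBall 0 1
  | n + 1 =>
      ((⋃ y ∈ netOf (Sq n) ((1/2)^(n+1)), (fun s => s - y) '' (Sq n))
          ∩ closedBall 0 ((1/2)^(n+1)))
        ∪ (K ∩ closedBall 0 ((1/2)^(n+1)))

/-- The finite sets whose sums form the Cantor-type compact set. -/
noncomputable def Fq (n : ℕ) : Set X := netOf (Sq K n) ((1/2)^(n+1))

variable {K}

lemma Sq_spec (hK : IsCompact K) :
    ∀ n, IsCompact (Sq K n) ∧ Sq K n ⊆ closedBall 0 ((1/2)^n) ∧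
      K ∩ closedBall 0 ((1/2)^n) ⊆ Sq K n := by
  intro n
  induction n with
  | zero =>
    refine ⟨hK.inter_right isClosed_closedBall, ?_, ?_⟩ <;> simp [Sq]
  | succ n ih =>
    obtain ⟨hc, hsub, hK'⟩ := ih
    refine ⟨?_, ?_, ?_⟩
    · apply IsCompact.union
      · apply IsCompact.inter_right _ isClosed_closedBall
        apply (netOf_finite (Sq K n) ((1/2)^(n+1))).isCompact_biUnion
        intro y _
        exact hc.image (continuous_id.sub continuous_const)
      · exact hK.inter_right isClosed_closedBall
    · intro x hx
      rcases hx with ⟨_, hx2⟩ | ⟨_, hx2⟩ <;> exact hx2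
    · intro x hx
      exact Or.inr hx

lemma Fq_finite (n : ℕ) : (Fq K n).Finite := netOf_finite _ _

lemma zero_mem_Fq (n : ℕ) : (0:X) ∈ Fq K n := zero_mem_netOf _ _

lemma Fq_subset (hK : IsCompact K) (n : ℕ) : Fq K n ⊆ closedBall 0 ((1/2)^n) := by
  intro y hy
  rcases netOf_subset _ _ hy with hy | hy
  · exact (Sq_spec hK n).2.1 hy
  · simp only [mem_singleton_iff] at hy
    subst hy
    simp only [mem_closedBall, dist_self]
    positivity

lemma Sq_step (hinv : ∀ x y z : X, dist (x + z) (y + z) = dist x y)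
    (hK : IsCompact K) (n : ℕ) :
    ∀ s ∈ Sq K n, ∃ y ∈ Fq K n, s - y ∈ Sq K (n + 1) := by
  intro s hs
  have hpos : (0:ℝ) < (1/2)^(n+1) := by positivity
  obtain ⟨y, hy, hd⟩ := netOf_cover (Sq_spec hK n).1 hpos s hs
  refine ⟨y, hy, Or.inl ⟨?_, ?_⟩⟩
  · exact mem_biUnion hy ⟨s, hs, rfl⟩
  · rw [mem_closedBall, hdist_sub_zero hinv]
    exact hd.le

variable (K) in
/-- The step-picking function. -/
noncomputable def pick (n : ℕ) (s : X) : X :=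
  if h : ∃ y ∈ Fq K n, s - y ∈ Sq K (n + 1) then h.choose else 0

variable (K) in
/-- the remainders, starting from `t` at index `N`. -/
noncomputable def rem (N : ℕ) (t : X) : ℕ → X
  | 0 => t
  | k + 1 => rem N t k - pick K (N + k) (rem N t k)

lemma rem_mem (hinv : ∀ x y z : X, dist (x + z) (y + z) = dist x y)
    (hK : IsCompact K) {N : ℕ} {t : X} (ht : t ∈ Sq K N) :
    ∀ k, rem K N t k ∈ Sq K (N + k) := by
  intro k
  induction k with
  | zero => simpa [rem] using ht
  | succ k ih =>
    have hex : ∃ y ∈ Fq K (N + k), rem K N t k - y ∈ Sq K (N + k + 1) :=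
      Sq_step hinv hK (N + k) _ ih
    show rem K N t k - pick K (N + k) (rem K N t k) ∈ _
    rw [pick, dif_pos hex]
    exact hex.choose_spec.2

lemma pick_mem_Fq (hinv : ∀ x y z : X, dist (x + z) (y + z) = dist x y)
    (hK : IsCompact K) {n : ℕ} {s : X} (hs : s ∈ Sq K n) :
    pick K n s ∈ Fq K n := by
  have hex : ∃ y ∈ Fq K n, s - y ∈ Sq K (n + 1) := Sq_step hinv hK n s hs
  rw [pick, dif_pos hex]
  exact hex.choose_spec.1

variable (K) in
/-- the tail sequence representing `t` starting at index `N`. -/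
noncomputable def tailSeq (N : ℕ) (t : X) (n : ℕ) : X :=
  if N ≤ n then pick K n (rem K N t (n - N)) else 0

lemma tailSeq_mem (hinv : ∀ x y z : X, dist (x + z) (y + z) = dist x y)
    (hK : IsCompact K) {N : ℕ} {t : X} (ht : t ∈ Sq K N) (n : ℕ) :
    tailSeq K N t n ∈ Fq K n := by
  rw [tailSeq]
  split
  · next hn =>
    have := rem_mem hinv hK ht (n - N)
    rw [show N + (n - N) = n by omega] at this
    exact pick_mem_Fq hinv hK this
  · exact zero_mem_Fq n

lemma tailSeq_telescope (hinv : ∀ x y z : X, dist (x + z) (y + z) = dist x y)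
    (hK : IsCompact K) {N : ℕ} {t : X} (ht : t ∈ Sq K N) (k : ℕ) :
    ∑ n ∈ Finset.Ico N (N + k), tailSeq K N t n = t - rem K N t k := by
  induction k with
  | zero => simp [rem]
  | succ k ih =>
    rw [show N + (k+1) = (N + k) + 1 by omega, Finset.sum_Ico_succ_top (by omega), ih]
    have hts : tailSeq K N t (N + k) = pick K (N + k) (rem K N t k) := by
      rw [tailSeq, if_pos (show N ≤ N + k by omega), show N + k - N = k by omega]
    rw [hts]
    show _ = t - rem K N t (k + 1)
    rw [rem]
    abel

lemma tailSeq_tendsto (hinv : ∀ x y z : X, dist (x + z) (y + z) = dist x y)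
    (hK : IsCompact K) {N : ℕ} {t : X} (ht : t ∈ Sq K N) :
    Tendsto (fun M => ∑ n ∈ Finset.Ico N M, tailSeq K N t n) atTop (𝓝 t) := by
  rw [tendsto_iff_dist_tendsto_zero]
  apply squeeze_zero (fun M => dist_nonneg)
    (g := fun M => if N ≤ M then ((1:ℝ)/2) ^ (N + (M - N)) else dist (0:X) t)
  · intro M
    by_cases hM : N ≤ M
    · rw [if_pos hM]
      have hsum : ∑ n ∈ Finset.Ico N M, tailSeq K N t n = t - rem K N t (M - N) := by
        have := tailSeq_telescope hinv hK ht (M - N)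
        rwa [show N + (M - N) = M by omega] at this
      rw [hsum]
      have hmem := rem_mem hinv hK ht (M - N)
      have hball := (Sq_spec hK (N + (M - N))).2.1 hmem
      rw [mem_closedBall] at hball
      calc dist (t - rem K N t (M - N)) t
          = dist (t - rem K N t (M - N) + rem K N t (M - N)) (t + rem K N t (M - N)) := by
            rw [hinv]
        _ = dist t (t + rem K N t (M - N)) := by rw [sub_add_cancel]
        _ = dist 0 (rem K N t (M - N)) := hdist_self_add hinv _ _
        _ = dist (rem K N t (M - N)) 0 := dist_comm _ _
        _ ≤ (1/2) ^ (N + (M - N)) := hball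
    · rw [if_neg hM]
      have : Finset.Ico N M = ∅ := by
        rw [Finset.Ico_eq_empty_iff]; omega
      rw [this]
      simp
  · have h1 : Tendsto (fun M : ℕ => ((1:ℝ)/2) ^ M) atTop (𝓝 0) :=
      tendsto_pow_atTop_nhds_zero_of_lt_one (by norm_num) (by norm_num)
    have h2 : Tendsto (fun M : ℕ => if N ≤ M then ((1:ℝ)/2) ^ (N + (M - N)) else dist (0:X) t)
        atTop (𝓝 0) := by
      apply h1.congr'
      filter_upwards [eventually_ge_atTop N] with M hM
      rw [if_pos hM]
      congr 1
      omega
    exact h2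

end construction

section limitmap

variable (K : Set X)

/-- the partial-sum maps. -/
noncomputable def ps (M : ℕ) (u : ℕ → X) : X := ∑ n ∈ Finset.range M, u n

/-- the product set. -/
def Pset : Set (ℕ → X) := Set.pi Set.univ (fun n => Fq K n)

/-- The limit map. -/
noncomputable def Phi (u : ℕ → X) : X :=
  if h : ∃ x, Tendsto (fun M => ps M u) atTop (𝓝 x) then h.choose else 0

variable {K}

lemma mem_Pset {u : ℕ → X} : u ∈ Pset K ↔ ∀ n, u n ∈ Fq K n := by
  simp [Pset]

lemma dist_ps_le (hinv : ∀ x y z : X, dist (x + z) (y + z) = dist x y)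
    (hK : IsCompact K) {u : ℕ → X} (hu : u ∈ Pset K) {M M' : ℕ} (h : M ≤ M') :
    dist (ps M u) (ps M' u) ≤ 2 * (1/2)^M := by
  rw [mem_Pset] at hu
  have : ps M' u = ps M u + ∑ n ∈ Finset.Ico M M', u n := by
    rw [ps, ps, Finset.range_eq_Ico, Finset.range_eq_Ico]
    exact (Finset.sum_Ico_consecutive u (Nat.zero_le M) h).symm
  rw [this, hdist_self_add hinv]
  calc dist 0 (∑ n ∈ Finset.Ico M M', u n)
      ≤ ∑ n ∈ Finset.Ico M M', dist 0 (u n) := hdist_zero_sum hinv _ _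
    _ ≤ ∑ n ∈ Finset.Ico M M', ((1:ℝ)/2)^n := by
        apply Finset.sum_le_sum
        intro n _
        rw [dist_comm]
        exact (mem_closedBall.1 (Fq_subset hK n (hu n)))
    _ ≤ 2 * (1/2)^M := sum_pow_Ico_le M M'

lemma cauchy_ps (hinv : ∀ x y z : X, dist (x + z) (y + z) = dist x y)
    (hK : IsCompact K) {u : ℕ → X} (hu : u ∈ Pset K) :
    CauchySeq (fun M => ps M u) := by
  apply cauchySeq_of_le_tendsto_0 (fun N => 2 * (1/2)^N)
  · intro n m N hn hm
    have key : ∀ a b : ℕ, N ≤ a → a ≤ b → dist (ps a u) (ps b u) ≤ 2 * (1/2)^N := by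
      intro a b ha hab
      calc dist (ps a u) (ps b u) ≤ 2 * (1/2)^a := dist_ps_le hinv hK hu hab
        _ ≤ 2 * (1/2)^N := by
            have := pow_le_pow_of_le_one (by norm_num : (0:ℝ) ≤ 1/2) (by norm_num) ha
            linarith
    rcases le_total n m with h | h
    · exact key n m hn h
    · rw [dist_comm]; exact key m n hm h
  · have : Tendsto (fun N : ℕ => ((1:ℝ)/2) ^ N) atTop (𝓝 0) :=
      tendsto_pow_atTop_nhds_zero_of_lt_one (by norm_num) (by norm_num)
    simpa using this.const_mul 2

lemma Phi_tendsto [CompleteSpace X]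
    (hinv : ∀ x y z : X, dist (x + z) (y + z) = dist x y)
    (hK : IsCompact K) {u : ℕ → X} (hu : u ∈ Pset K) :
    Tendsto (fun M => ps M u) atTop (𝓝 (Phi u)) := by
  have h : ∃ x, Tendsto (fun M => ps M u) atTop (𝓝 x) :=
    cauchySeq_tendsto_of_complete (cauchy_ps hinv hK hu)
  rw [Phi, dif_pos h]
  exact h.choose_spec

lemma dist_ps_Phi [CompleteSpace X]
    (hinv : ∀ x y z : X, dist (x + z) (y + z) = dist x y)
    (hK : IsCompact K) {u : ℕ → X} (hu : u ∈ Pset K) (M : ℕ) :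
    dist (ps M u) (Phi u) ≤ 2 * (1/2)^M := by
  have := Phi_tendsto hinv hK hu
  have h2 : Tendsto (fun M' => dist (ps M u) (ps M' u)) atTop (𝓝 (dist (ps M u) (Phi u))) :=
    (continuous_const.dist continuous_id).continuousAt.tendsto.comp this
  apply le_of_tendsto h2
  filter_upwards [eventually_ge_atTop M] with M' hM'
  exact dist_ps_le hinv hK hu hM'

lemma Phi_continuousOn [CompleteSpace X]
    (hinv : ∀ x y z : X, dist (x + z) (y + z) = dist x y)
    (hK : IsCompact K) :
    ContinuousOn (Phi) (Pset K) := by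
  have huc : TendstoUniformlyOn (fun M u => ps M u) (Phi) atTop (Pset K) := by
    rw [Metric.tendstoUniformlyOn_iff]
    intro ε hε
    have : Tendsto (fun M : ℕ => 2 * ((1:ℝ)/2) ^ M) atTop (𝓝 0) := by
      have : Tendsto (fun M : ℕ => ((1:ℝ)/2) ^ M) atTop (𝓝 0) :=
        tendsto_pow_atTop_nhds_zero_of_lt_one (by norm_num) (by norm_num)
      simpa using this.const_mul 2
    filter_upwards [this.eventually (gt_mem_nhds hε)] with M hM u hu
    calc dist (Phi u) (ps M u) = dist (ps M u) (Phi u) := dist_comm _ _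
      _ ≤ 2 * (1/2)^M := dist_ps_Phi hinv hK hu M
      _ < ε := hM
  apply huc.continuousOn
  apply Eventually.frequently
  filter_upwards with M
  apply Continuous.continuousOn
  exact continuous_finset_sum _ (fun n _ => continuous_apply n)

lemma Pset_compact (hK : IsCompact K) : IsCompact (Pset K) :=
  isCompact_univ_pi (fun n => (Fq_finite n).isCompact)

end limitmap

/-- The main lemma: if every compact set has a translate of `A` with nonempty relative
interior, then no compact `K` can have all translates miss being a neighborhood of `0`. -/
lemma main [CompleteSpace X]
    (hinv : ∀ x y z : X, dist (x + z) (y + z) = dist x y)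
    (A : Set X)
    (h : ∀ K : Set X, IsCompact K →
      ∃ x : X, ∃ z ∈ K, K ∩ {w | w - x ∈ A} ∈ 𝓝[K] z)
    (K : Set X) (hK : IsCompact K)
    (hA : ∀ y : X, K ∩ {z | z - y ∈ A} ∉ 𝓝[K] (0:X)) : False := by
  -- the Cantor-type compact set
  set C : Set X := Phi '' Pset K with hC
  have hCcomp : IsCompact C :=
    (Pset_compact hK).image_of_continuousOn (Phi_continuousOn hinv hK)
  obtain ⟨x, z, hzC, hnbhd⟩ := h C hCcomp
  obtain ⟨u, huP, huz⟩ := hzC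
  -- extract an open set
  obtain ⟨U, hUopen, hzU, hUsub⟩ := mem_nhdsWithin.1 hnbhd
  -- use continuity to get a product neighborhood
  have hcont : ContinuousWithinAt (Phi) (Pset K) u :=
    (Phi_continuousOn hinv hK) u huP
  have hU' : Phi ⁻¹' U ∈ 𝓝[Pset K] u := by
    apply hcont
    rw [huz]
    exact hUopen.mem_nhds hzU
  obtain ⟨V, hVopen, huV, hVsub⟩ := mem_nhdsWithin.1 hU'
  have hVnhds : V ∈ 𝓝 u := hVopen.mem_nhds huV
  rw [nhds_pi, Filter.mem_pi] at hVnhds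
  obtain ⟨I, hIfin, tset, htset, hIsub⟩ := hVnhds
  -- choose N beyond all of I
  obtain ⟨N, hN⟩ : ∃ N, ∀ i ∈ I, i < N := by
    rcases hIfin.bddAbove with ⟨b, hb⟩
    exact ⟨b + 1, fun i hi => Nat.lt_succ_of_le (hb hi)⟩
  -- the key: every point of K ∩ closedBall 0 ((1/2)^N) is in a common translate of A
  set y : X := x - ps N u with hy
  apply hA y
  have hpos : (0:ℝ) < (1/2)^N := by positivity
  apply mem_nhdsWithin.2
  refine ⟨ball 0 ((1/2)^N), isOpen_ball, mem_ball_self hpos, ?_⟩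
  rintro t ⟨htball, htK⟩
  refine ⟨htK, ?_⟩
  -- t ∈ Sq K N
  have htS : t ∈ Sq K N := (Sq_spec hK N).2.2 ⟨htK, ball_subset_closedBall htball⟩
  -- build the combined sequence
  set w : ℕ → X := fun n => if n < N then u n else tailSeq K N t n with hw
  have hwP : w ∈ Pset K := by
    rw [mem_Pset]
    intro n
    show (if n < N then u n else tailSeq K N t n) ∈ Fq K n
    split
    · exact mem_Pset.1 huP n
    · exact tailSeq_mem hinv hK htS n
  -- w ∈ V
  have hwV : w ∈ V := by
    apply hIsub
    intro i hi
    have hwi : w i = u i := by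
      show (if i < N then u i else tailSeq K N t i) = u i
      exact if_pos (hN i hi)
    rw [hwi]
    exact mem_of_mem_nhds (htset i)
  have hwU : Phi w ∈ U := hVsub ⟨hwV, hwP⟩
  have hwC : Phi w ∈ C := ⟨w, hwP, rfl⟩
  have hwA : Phi w ∈ {w | w - x ∈ A} := (hUsub ⟨hwU, hwC⟩).2
  -- compute Phi w = ps N u + t
  have hps_eq : ps N w = ps N u := by
    rw [ps, ps]
    apply Finset.sum_congr rfl
    intro n hn
    show (if n < N then u n else tailSeq K N t n) = u n
    exact if_pos (Finset.mem_range.1 hn)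
  have htail : Tendsto (fun M => ∑ n ∈ Finset.Ico N M, w n) atTop (𝓝 t) := by
    apply (tailSeq_tendsto hinv hK htS).congr
    intro M
    apply Finset.sum_congr rfl
    intro n hn
    show tailSeq K N t n = (if n < N then u n else tailSeq K N t n)
    rw [if_neg (by have := (Finset.mem_Ico.1 hn).1; omega)]
  have hPhiw : Phi w = ps N u + t := by
    have h1 : Tendsto (fun M => ps M w) atTop (𝓝 (ps N u + t)) := by
      have h2 : Tendsto (fun M => ps N w + ∑ n ∈ Finset.Ico N M, w n) atTop
          (𝓝 (ps N w + t)) := tendsto_const_nhds.add htail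
      rw [hps_eq] at h2
      apply h2.congr'
      filter_upwards [eventually_ge_atTop N] with M hM
      show ps N u + ∑ n ∈ Finset.Ico N M, w n = ps M w
      rw [← hps_eq]
      simp only [ps, Finset.range_eq_Ico]
      exact Finset.sum_Ico_consecutive _ (Nat.zero_le N) hM
    exact tendsto_nhds_unique (Phi_tendsto hinv hK hwP) h1
  -- conclude
  show t - y ∈ A
  have : Phi w - x ∈ A := hwA
  rw [hPhiw] at this
  rw [hy]
  convert this using 1
  abel

end HaarProof

open Topology

/-- A subset `A` of a topological Abelian group is *Haar-open* if for every compact `K` and every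
`p ∈ K` there is `y` such that `K ∩ (A + y)` is a neighborhood of `p` in `K`, where
`A + y = {z | z - y ∈ A}`. -/
def IsHaarOpen {X : Type*} [TopologicalSpace X] [AddCommGroup X] (A : Set X) : Prop :=
  ∀ K : Set X, IsCompact K → ∀ p ∈ K, ∃ y : X, K ∩ {z | z - y ∈ A} ∈ 𝓝[K] p

/-- If in an Abelian group with a complete invariant metric, for every compact `K` some translate
of `A` meets `K` in a set with non-empty interior in `K`, then `A` is Haar-open. -/
theorem statement1 {X : Type*} [MetricSpace X] [CompleteSpace X] [AddCommGroup X]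
    [IsTopologicalAddGroup X]
    (hinv : ∀ x y z : X, dist (x + z) (y + z) = dist x y)
    (A : Set X)
    (h : ∀ K : Set X, IsCompact K →
      ∃ x : X, ∃ z ∈ K, K ∩ {w | w - x ∈ A} ∈ 𝓝[K] z) :
    IsHaarOpen A := by
  intro K hK p hp
  by_contra hcon
  push_neg at hcon
  -- translate so that p becomes 0
  set K' : Set X := (fun k => k - p) '' K with hK'
  have hK'comp : IsCompact K' := hK.image (continuous_id.sub continuous_const)
  refine HaarProof.main hinv A h K' hK'comp ?_
  intro y hy
  obtain ⟨U, hUopen, hU0, hUsub⟩ := mem_nhdsWithin.1 hy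
  apply hcon (y + p)
  apply mem_nhdsWithin.2
  refine ⟨(fun z => z - p) ⁻¹' U, hUopen.preimage (continuous_id.sub continuous_const), ?_, ?_⟩
  · show p - p ∈ U
    simpa using hU0
  · rintro z ⟨hzU, hzK⟩
    refine ⟨hzK, ?_⟩
    have hzK' : z - p ∈ K' := ⟨z, hzK, rfl⟩
    have := hUsub ⟨hzU, hzK'⟩
    have hzA : (z - p) - y ∈ A := this.2
    show z - (y + p) ∈ A
    convert hzA using 1
    abel
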